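/- Let t_V ≥ 0, t_D > 0, and let q_1, …, q_m ∈ [0,1] with m ≥ 1, and write p_m = 1 − q_m for the acceptance probability of the m-th box. If p_m > t_V / t_D then T(q_1, …, q_m) ≤ T(q_1, …, q_{m-1}), i.e., adding the m-th verification does not increase the expected episode duration; and if p_m ≤ t_V / t_D then T(q_1, …, q_m) ≥ T(q_1, …, q_{m-1}). -/

import Mathlib

/-- Expected episode duration: `expDur tV tD [q₁, …, qₘ]` is the expected annotation time of
the strategy `VᵐD` that verifies boxes with rejection probabilities `q₁, …, qₘ` in order
(each verification taking time `tV`) and draws manually (taking time `tD`) if all are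
rejected: `expDur tV tD [] = tD` and `expDur tV tD (q :: qs) = tV + q * expDur tV tD qs`. -/
noncomputable def expDur (tV tD : ℝ) : List ℝ → ℝ
  | [] => tD
  | q :: qs => tV + q * expDur tV tD qs

/-- With acceptance probability `p_m = 1 - q_m` of the last box: if `p_m > t_V / t_D` then
adding the `m`-th verification does not increase the expected duration, and if
`p_m ≤ t_V / t_D` then it does not decrease it. -/
theorem expDur_last_verification (tV tD : ℝ) (htV : 0 ≤ tV) (htD : 0 < tD)
    (A : List ℝ) (x : ℝ)
    (hA : ∀ q ∈ A, 0 ≤ q ∧ q ≤ 1) (hx : 0 ≤ x ∧ x ≤ 1) :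
    (tV / tD < 1 - x → expDur tV tD (A ++ [x]) ≤ expDur tV tD A) ∧
    (1 - x ≤ tV / tD → expDur tV tD A ≤ expDur tV tD (A ++ [x])) := by
  induction A with
  | nil =>
    simp only [List.nil_append, expDur]
    constructor
    · intro h
      have := (div_lt_iff₀ htD).mp h
      nlinarith
    · intro h
      have := (le_div_iff₀ htD).mp h
      nlinarith
  | cons q A ih =>
    have hq : 0 ≤ q := (hA q List.mem_cons_self).1
    have ih' := ih (fun r hr => hA r (List.mem_cons_of_mem q hr))
    simp only [List.cons_append, expDur, List.append_eq]
    constructor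
    · intro h
      have := ih'.1 h
      nlinarith
    · intro h
      have := ih'.2 h
      nlinarith
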